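/- Let E be a finite-dimensional real normed vector space, ω : E →ₗ[ℝ] E →ₗ[ℝ] ℝ a nondegenerate alternating bilinear form, and U, S linear subspaces of E that are complementary (E = U ⊕ S) and on which ω vanishes identically (ω u u' = 0 for all u, u' ∈ U and ω s s' = 0 for all s, s' ∈ S). Then there exists a constant c > 0 such that for every continuous linear map A : E →L[ℝ] E with ω (A x) (A y) = ω x y for all x, y ∈ E, A(U) ⊆ U and A(S) ⊆ S, and for every u ∈ U, one has c·‖u‖ ≤ (sup { ‖A s‖ : s ∈ S, ‖s‖ = 1 })·‖A u‖. -/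

import Mathlib

set_option maxHeartbeats 1000000 in
theorem lagrangian_contraction_expansion {E : Type*} [NormedAddCommGroup E]
    [NormedSpace ℝ E] [FiniteDimensional ℝ E] (ω : E →ₗ[ℝ] E →ₗ[ℝ] ℝ)
    (halt : ∀ x : E, ω x x = 0)
    (hnd : ∀ x : E, (∀ y : E, ω x y = 0) → x = 0)
    (U S : Submodule ℝ E) (hcompl : IsCompl U S)
    (hU : ∀ u ∈ U, ∀ u' ∈ U, ω u u' = 0)
    (hS : ∀ s ∈ S, ∀ s' ∈ S, ω s s' = 0) :
    ∃ c > (0 : ℝ), ∀ A : E →L[ℝ] E,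
      (∀ x y : E, ω (A x) (A y) = ω x y) →
      (∀ u ∈ U, A u ∈ U) → (∀ s ∈ S, A s ∈ S) →
      ∀ u ∈ U, c * ‖u‖ ≤ (sSup ((fun s => ‖A s‖) '' {s : E | s ∈ S ∧ ‖s‖ = 1})) * ‖A u‖ := by
  classical
  -- a continuous version of ω
  let ω₁ : E →ₗ[ℝ] (E →L[ℝ] ℝ) :=
    { toFun := fun x => LinearMap.toContinuousLinearMap (ω x)
      map_add' := by intro x y; ext z; simp
      map_smul' := by intro c x; ext z; simp }
  let ω' : E →L[ℝ] (E →L[ℝ] ℝ) := LinearMap.toContinuousLinearMap ω₁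
  have hω' : ∀ x y : E, ω' x y = ω x y := fun x y => rfl
  have hω'bound : ∀ x y : E, |ω x y| ≤ ‖ω'‖ * ‖x‖ * ‖y‖ := by
    intro x y
    calc |ω x y| = ‖ω' x y‖ := rfl
      _ ≤ ‖ω' x‖ * ‖y‖ := (ω' x).le_opNorm y
      _ ≤ ‖ω'‖ * ‖x‖ * ‖y‖ := by
          have := ω'.le_opNorm x
          exact mul_le_mul_of_nonneg_right this (norm_nonneg y)
  -- the pairing U → S*
  let T : U →ₗ[ℝ] (S →L[ℝ] ℝ) :=
    { toFun := fun u => (ω' u).comp S.subtypeL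
      map_add' := by intro x y; ext z; simp
      map_smul' := by intro c x; ext z; simp }
  have hT : ∀ (u : U) (s : S), T u s = ω u s := fun u s => rfl
  have hinj : Function.Injective T := by
    rw [← LinearMap.ker_eq_bot, LinearMap.ker_eq_bot']
    intro u hu
    have hωu : ∀ y : E, ω (u : E) y = 0 := by
      intro y
      have hy : y ∈ U ⊔ S := by rw [hcompl.sup_eq_top]; trivial
      rcases Submodule.mem_sup.1 hy with ⟨a, ha, b, hb, rfl⟩
      have h1 : ω (u : E) a = 0 := hU u u.2 a ha
      have h2 : ω (u : E) b = 0 := by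
        have := congrArg (fun f : S →L[ℝ] ℝ => f ⟨b, hb⟩) hu
        simpa [hT] using this
      simp [h1, h2]
    have : (u : E) = 0 := hnd u hωu
    exact Subtype.ext this
  obtain ⟨K, hKpos, hant⟩ := @LinearMap.exists_antilipschitzWith ℝ _ U _ _ (S →L[ℝ] ℝ) _ _ _ _ T (LinearMap.ker_eq_bot.2 hinj)
  have hlow : ∀ u : U, ‖u‖ ≤ K * ‖T u‖ := by
    intro u
    exact AntilipschitzWith.le_mul_norm (f := T) hant (map_zero T) u
  have hKpos' : (0 : ℝ) < K := hKpos
  set Cω : ℝ := ‖ω'‖ + 1 with hCω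
  have hCωpos : 0 < Cω := by positivity
  refine ⟨((K : ℝ) * Cω)⁻¹, by positivity, ?_⟩
  intro A hA hAU hAS u hu
  set M : ℝ := sSup ((fun s => ‖A s‖) '' {s : E | s ∈ S ∧ ‖s‖ = 1}) with hM
  have hM0 : 0 ≤ M := by
    apply Real.sSup_nonneg
    rintro x ⟨s, hs, rfl⟩
    exact norm_nonneg _
  have hbdd : BddAbove ((fun s => ‖A s‖) '' {s : E | s ∈ S ∧ ‖s‖ = 1}) := by
    refine ⟨‖A‖, ?_⟩
    rintro x ⟨s, ⟨hs, hs1⟩, rfl⟩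
    simpa [hs1] using A.le_opNorm s
  have hMs : ∀ s ∈ S, ‖A s‖ ≤ M * ‖s‖ := by
    intro s hs
    rcases eq_or_ne s 0 with rfl | hs0
    · simp
    · have hnorm : ‖s‖ ≠ 0 := norm_ne_zero_iff.2 hs0
      set t : E := ‖s‖⁻¹ • s with ht
      have htS : t ∈ S := S.smul_mem _ hs
      have ht1 : ‖t‖ = 1 := by
        rw [ht, norm_smul, norm_inv, norm_norm]
        field_simp
      have hmem : ‖A t‖ ∈ (fun s => ‖A s‖) '' {s : E | s ∈ S ∧ ‖s‖ = 1} :=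
        ⟨t, ⟨htS, ht1⟩, rfl⟩
      have hle : ‖A t‖ ≤ M := le_csSup hbdd hmem
      have hAt : ‖A t‖ = ‖s‖⁻¹ * ‖A s‖ := by
        rw [ht, map_smul, norm_smul, norm_inv, norm_norm]
      rw [hAt] at hle
      have := mul_le_mul_of_nonneg_left hle (norm_nonneg s)
      calc ‖A s‖ = ‖s‖ * (‖s‖⁻¹ * ‖A s‖) := by field_simp
        _ ≤ ‖s‖ * M := this
        _ = M * ‖s‖ := mul_comm _ _
  -- bound on ‖T u‖
  have hTu : ‖T ⟨u, hu⟩‖ ≤ Cω * (M * ‖A u‖) := by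
    apply ContinuousLinearMap.opNorm_le_bound
    · positivity
    · intro s
      have h1 : T ⟨u, hu⟩ s = ω u s := hT ⟨u, hu⟩ s
      have h2 : ω (u : E) (s : E) = ω (A u) (A s) := (hA u s).symm
      have h3 : |ω (A u) (A s)| ≤ ‖ω'‖ * ‖A u‖ * ‖A s‖ := hω'bound _ _
      have h4 : ‖A (s : E)‖ ≤ M * ‖s‖ := by
        simpa using hMs s s.2
      calc ‖T ⟨u, hu⟩ s‖ = |ω (A u) (A s)| := by rw [h1, h2]; rfl
        _ ≤ ‖ω'‖ * ‖A u‖ * ‖A s‖ := h3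
        _ ≤ ‖ω'‖ * ‖A u‖ * (M * ‖s‖) := by
            apply mul_le_mul_of_nonneg_left h4
            positivity
        _ ≤ Cω * ‖A u‖ * (M * ‖s‖) := by
            apply mul_le_mul_of_nonneg_right _ (by positivity)
            apply mul_le_mul_of_nonneg_right _ (norm_nonneg _)
            simp [hCω]
        _ = Cω * (M * ‖A u‖) * ‖s‖ := by ring
  have hlowu : ‖u‖ ≤ (K : ℝ) * (Cω * (M * ‖A u‖)) := by
    have h := hlow ⟨u, hu⟩
    have hnu : ‖(⟨u, hu⟩ : U)‖ = ‖u‖ := rfl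
    rw [hnu] at h
    exact h.trans (mul_le_mul_of_nonneg_left hTu (le_of_lt hKpos'))
  rw [inv_mul_le_iff₀ (by positivity)]
  calc ‖u‖ ≤ (K : ℝ) * (Cω * (M * ‖A u‖)) := hlowu
    _ = (K : ℝ) * Cω * (M * ‖A u‖) := by ring
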